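/- For all complex numbers z₁, z₂, we have |Im((z₂ ln|z₂|² − z₁ ln|z₁|²)(conj(z₂) − conj(z₁)))| ≤ 4|z₂ − z₁|², where by convention z ln|z|² = 0 when z = 0. -/

import Mathlib

/-- The nonlinearity `F(z) = z ln|z|²`, extended by `0` at `z = 0`. -/
noncomputable def logNL (z : ℂ) : ℂ :=
  if z = 0 then 0 else z * Real.log (‖z‖ ^ 2)

private lemma key_log (a b t d : ℝ) (ha : 0 < a) (hab : a ≤ b)
    (ht : |t| ≤ d * a) (hbad : b - a ≤ d) (hd : 0 ≤ d) :
    |Real.log b - Real.log a| * |t| ≤ d ^ 2 := by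
  have hb : 0 < b := ha.trans_le hab
  have h3 : 0 ≤ Real.log b - Real.log a := sub_nonneg.2 (Real.log_le_log ha hab)
  rw [abs_of_nonneg h3]
  have h1 : Real.log b - Real.log a = Real.log (b / a) := (Real.log_div hb.ne' ha.ne').symm
  have h2 : Real.log (b / a) ≤ b / a - 1 := Real.log_le_sub_one_of_pos (div_pos hb ha)
  have h4 : (0:ℝ) ≤ b / a - 1 := by
    have : (1:ℝ) ≤ b / a := (one_le_div ha).2 hab
    linarith
  calc (Real.log b - Real.log a) * |t| ≤ (b / a - 1) * (d * a) := by
        apply mul_le_mul (h1 ▸ h2) ht (abs_nonneg t) h4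
    _ = (b - a) * d := by field_simp
    _ ≤ d * d := mul_le_mul hbad le_rfl hd hd
    _ = d ^ 2 := (sq d).symm

theorem logNL_imaginary_estimate (z₁ z₂ : ℂ) :
    |((logNL z₂ - logNL z₁) * (starRingEnd ℂ z₂ - starRingEnd ℂ z₁)).im| ≤
      4 * ‖z₂ - z₁‖ ^ 2 := by
  have hd : (0:ℝ) ≤ 4 * ‖z₂ - z₁‖ ^ 2 := by positivity
  by_cases h₁ : z₁ = 0
  · subst h₁
    by_cases h₂ : z₂ = 0
    · simp [h₂, logNL]
    · have : ((logNL z₂ - logNL 0) * (starRingEnd ℂ z₂ - starRingEnd ℂ 0)).im = 0 := by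
        simp [logNL, h₂, Complex.sub_im, Complex.mul_im, Complex.mul_re,
          Complex.conj_re, Complex.conj_im, Complex.ofReal_re, Complex.ofReal_im]
        ring
      rw [this]; simpa using hd
  by_cases h₂ : z₂ = 0
  · subst h₂
    have : ((logNL 0 - logNL z₁) * (starRingEnd ℂ 0 - starRingEnd ℂ z₁)).im = 0 := by
      simp [logNL, h₁, Complex.sub_im, Complex.mul_im, Complex.mul_re,
        Complex.conj_re, Complex.conj_im, Complex.ofReal_re, Complex.ofReal_im]
      ring
    rw [this]; simpa using hd
  -- main case
  set g₁ : ℝ := Real.log (‖z₁‖ ^ 2) with hg₁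
  set g₂ : ℝ := Real.log (‖z₂‖ ^ 2) with hg₂
  set t : ℝ := (z₂ * starRingEnd ℂ z₁).im with htdef
  have him : ((logNL z₂ - logNL z₁) * (starRingEnd ℂ z₂ - starRingEnd ℂ z₁)).im
      = (g₁ - g₂) * t := by
    simp only [logNL, h₁, h₂, if_false, htdef, Complex.sub_im, Complex.sub_re,
      Complex.mul_im, Complex.mul_re, Complex.conj_re, Complex.conj_im,
      Complex.ofReal_re, Complex.ofReal_im]
    ring
  have hr₁ : 0 < ‖z₁‖ := norm_pos_iff.mpr h₁
  have hr₂ : 0 < ‖z₂‖ := norm_pos_iff.mpr h₂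
  set d : ℝ := ‖z₂ - z₁‖ with hddef
  have hd0 : 0 ≤ d := norm_nonneg _
  have ht₁ : |t| ≤ d * ‖z₁‖ := by
    have : t = ((z₂ - z₁) * starRingEnd ℂ z₁).im := by
      simp [htdef, Complex.sub_im, Complex.mul_im, Complex.sub_re, Complex.mul_re,
        Complex.conj_re, Complex.conj_im]
      ring
    rw [this]
    calc |((z₂ - z₁) * starRingEnd ℂ z₁).im| ≤ ‖(z₂ - z₁) * starRingEnd ℂ z₁‖ :=
          Complex.abs_im_le_norm _
      _ = d * ‖z₁‖ := by rw [norm_mul, Complex.norm_conj]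
  have ht₂ : |t| ≤ d * ‖z₂‖ := by
    have : t = -((z₁ - z₂) * starRingEnd ℂ z₂).im := by
      simp [htdef, Complex.sub_im, Complex.mul_im, Complex.sub_re, Complex.mul_re,
        Complex.conj_re, Complex.conj_im]
      ring
    rw [this, abs_neg]
    calc |((z₁ - z₂) * starRingEnd ℂ z₂).im| ≤ ‖(z₁ - z₂) * starRingEnd ℂ z₂‖ :=
          Complex.abs_im_le_norm _
      _ = d * ‖z₂‖ := by
          rw [norm_mul, Complex.norm_conj, ← norm_neg (z₁ - z₂), neg_sub]
  have hg : g₁ - g₂ = 2 * (Real.log (‖z₁‖) - Real.log (‖z₂‖)) := by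
    rw [hg₁, hg₂, Real.log_pow, Real.log_pow]; push_cast; ring
  rw [him, abs_mul, hg]
  have hsub : |‖z₂‖ - ‖z₁‖| ≤ d :=
    abs_norm_sub_norm_le z₂ z₁
  rcases le_total (‖z₁‖) (‖z₂‖) with hle | hle
  · have hk := key_log (‖z₁‖) (‖z₂‖) t d hr₁ hle ht₁
      (le_trans (le_abs_self _) hsub) hd0
    have : |Real.log (‖z₁‖) - Real.log (‖z₂‖)|
        = |Real.log (‖z₂‖) - Real.log (‖z₁‖)| := abs_sub_comm _ _
    rw [abs_mul, this, abs_two, mul_assoc]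
    nlinarith
  · have hsub' : ‖z₁‖ - ‖z₂‖ ≤ d := by
      have := abs_sub_comm (‖z₂‖) (‖z₁‖)
      calc ‖z₁‖ - ‖z₂‖ ≤ |‖z₁‖ - ‖z₂‖| := le_abs_self _
        _ = |‖z₂‖ - ‖z₁‖| := abs_sub_comm _ _
        _ ≤ d := hsub
    have hk := key_log (‖z₂‖) (‖z₁‖) t d hr₂ hle ht₂ hsub' hd0
    rw [abs_mul, abs_two, mul_assoc]
    nlinarith
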